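/- For every d ≥ 1, the alternating group Alt(3d) on {1, …, 3d} is generated by Alt({d+1, …, 3d}) together with the union over i = 1, …, d of Alt({i, d+i, 2d+i}). -/

import Mathlib

set_option linter.unusedSectionVars false

/-- The set of even permutations of `Fin n` supported in a subset `S`. -/
def altSupported (n : ℕ) (S : Set (Fin n)) : Set (Equiv.Perm (Fin n)) :=
  {σ | σ ∈ alternatingGroup (Fin n) ∧ ∀ x, x ∉ S → σ x = x}

namespace AltGenAux

open Equiv Equiv.Perm

variable {α : Type*} [DecidableEq α] [Fintype α]

lemma t_mem_alternating {a b c : α} (hab : a ≠ b) (hbc : b ≠ c) :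
    (swap a b * swap b c) ∈ alternatingGroup α := by
  rw [Equiv.Perm.mem_alternatingGroup, map_mul, Equiv.Perm.sign_swap hab,
    Equiv.Perm.sign_swap hbc]
  decide

lemma t_apply₁ {a b c : α} (hab : a ≠ b) (hac : a ≠ c) :
    (swap a b * swap b c) a = b := by
  rw [Equiv.Perm.mul_apply, swap_apply_of_ne_of_ne hab hac, swap_apply_left]

lemma t_apply₂ {a b c : α} (hca : c ≠ a) (hcb : c ≠ b) :
    (swap a b * swap b c) b = c := by
  rw [Equiv.Perm.mul_apply, swap_apply_left, swap_apply_of_ne_of_ne hca hcb]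

lemma t_apply₃ {a b c : α} : (swap a b * swap b c) c = a := by
  rw [Equiv.Perm.mul_apply, swap_apply_right, swap_apply_right]

lemma t_apply_other {a b c x : α} (hxa : x ≠ a) (hxb : x ≠ b) (hxc : x ≠ c) :
    (swap a b * swap b c) x = x := by
  rw [Equiv.Perm.mul_apply, swap_apply_of_ne_of_ne hxb hxc, swap_apply_of_ne_of_ne hxa hxb]

lemma t_cyclic {a b c : α} (hab : a ≠ b) (hac : a ≠ c) (hbc : b ≠ c) :
    swap a b * swap b c = swap b c * swap c a := by
  ext x
  by_cases hx1 : x = a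
  · rw [hx1, t_apply₁ hab hac, t_apply₃]
  by_cases hx2 : x = b
  · rw [hx2, t_apply₂ (Ne.symm hac) (Ne.symm hbc), t_apply₁ hbc (Ne.symm hab)]
  by_cases hx3 : x = c
  · rw [hx3, t_apply₃, t_apply₂ hab hac]
  · rw [t_apply_other hx1 hx2 hx3, t_apply_other hx2 hx3 hx1]

lemma t_conj (τ : Equiv.Perm α) (a b c : α) :
    swap (τ a) (τ b) * swap (τ b) (τ c) = τ * (swap a b * swap b c) * τ⁻¹ := by
  rw [Equiv.swap_apply_apply, Equiv.swap_apply_apply]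
  group

lemma isThreeCycle_eq_t {σ : Equiv.Perm α} (h : σ.IsThreeCycle) :
    ∃ a b c : α, a ≠ b ∧ a ≠ c ∧ b ≠ c ∧ σ = swap a b * swap b c := by
  obtain ⟨a, ha, -⟩ := h.isCycle
  have h3 : σ ^ 3 = 1 := by rw [← h.orderOf]; exact pow_orderOf_eq_one σ
  have h3a : σ (σ (σ a)) = a := by
    have : (σ ^ 3) a = a := by rw [h3]; rfl
    simpa [pow_succ, Equiv.Perm.mul_apply] using this
  have hab : a ≠ σ a := Ne.symm ha
  have hac : a ≠ σ (σ a) := by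
    intro e
    rw [← e] at h3a
    exact ha h3a
  have hbc : σ a ≠ σ (σ a) := fun e => hab (σ.injective e)
  refine ⟨a, σ a, σ (σ a), hab, hac, hbc, ?_⟩
  have hsub : ({a, σ a, σ (σ a)} : Finset α) ⊆ σ.support := by
    intro x hx
    simp only [Finset.mem_insert, Finset.mem_singleton] at hx
    rw [Equiv.Perm.mem_support]
    rcases hx with rfl | rfl | rfl
    · exact ha
    · exact Ne.symm hbc
    · rw [h3a]; exact hac
  have hsupp : σ.support = {a, σ a, σ (σ a)} := by
    refine (Finset.eq_of_subset_of_card_le hsub ?_).symm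
    rw [h.card_support]
    rw [Finset.card_insert_of_notMem (by simp [hab, hac]),
      Finset.card_insert_of_notMem (by simp [hbc]), Finset.card_singleton]
  ext x
  by_cases hx1 : x = a
  · rw [hx1, t_apply₁ hab hac]
  by_cases hx2 : x = σ a
  · rw [hx2, t_apply₂ (Ne.symm hac) (Ne.symm hbc)]
  by_cases hx3 : x = σ (σ a)
  · rw [hx3, t_apply₃, h3a]
  · rw [t_apply_other hx1 hx2 hx3]
    have : x ∉ σ.support := by
      rw [hsupp]
      simp [hx1, hx2, hx3]
    rwa [Equiv.Perm.notMem_support] at this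

lemma gens_lt₁ {d : ℕ} (i : Fin d) : i.1 < 3 * d := by have := i.2; omega

lemma gens_lt₂ {d : ℕ} (i : Fin d) : d + i.1 < 3 * d := by have := i.2; omega

lemma gens_lt₃ {d : ℕ} (i : Fin d) : 2 * d + i.1 < 3 * d := by have := i.2; omega

/-- The generating set from the theorem statement. -/
def gens (d : ℕ) : Set (Equiv.Perm (Fin (3 * d))) :=
  altSupported (3 * d) {x | d ≤ (x : ℕ)} ∪
    ⋃ i : Fin d,
      altSupported (3 * d)
        {⟨i.1, gens_lt₁ i⟩, ⟨d + i.1, gens_lt₂ i⟩,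
          ⟨2 * d + i.1, gens_lt₃ i⟩}

lemma key (d : ℕ) (n : ℕ) : ∀ a b c : Fin (3 * d), a ≠ b → a ≠ c → b ≠ c →
    (if (a : ℕ) < d then 1 else 0) + (if (b : ℕ) < d then 1 else 0)
      + (if (c : ℕ) < d then 1 else 0) ≤ n →
    swap a b * swap b c ∈ Subgroup.closure (gens d) := by
  have hhigh : ∀ a b c : Fin (3 * d), a ≠ b → a ≠ c → b ≠ c →
      ¬ (a : ℕ) < d → ¬ (b : ℕ) < d → ¬ (c : ℕ) < d →
      swap a b * swap b c ∈ Subgroup.closure (gens d) := by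
    intro a b c hab hac hbc hla hlb hlc
    refine Subgroup.subset_closure (Or.inl ⟨t_mem_alternating hab hbc, ?_⟩)
    intro x hx
    simp only [Set.mem_setOf_eq, not_le] at hx
    exact t_apply_other (Fin.ne_of_val_ne (by omega)) (Fin.ne_of_val_ne (by omega))
      (Fin.ne_of_val_ne (by omega))
  induction n with
  | zero =>
    intro a b c hab hac hbc hcount
    split_ifs at hcount with h1 h2 h3 <;>
      first
      | omega
      | exact hhigh a b c hab hac hbc (by assumption) (by assumption) (by assumption)
  | succ n ih =>
    -- core: the case where the first point is low
    have core : ∀ a b c : Fin (3 * d), a ≠ b → a ≠ c → b ≠ c →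
        (if (a : ℕ) < d then 1 else 0) + (if (b : ℕ) < d then 1 else 0)
          + (if (c : ℕ) < d then 1 else 0) ≤ n + 1 →
        (a : ℕ) < d → swap a b * swap b c ∈ Subgroup.closure (gens d) := by
      intro a b c hab hac hbc hcount ha
      obtain ⟨B, hBval⟩ : ∃ B : Fin (3 * d), (B : ℕ) = d + (a : ℕ) :=
        ⟨⟨d + (a : ℕ), by omega⟩, rfl⟩
      obtain ⟨C, hCval⟩ : ∃ C : Fin (3 * d), (C : ℕ) = 2 * d + (a : ℕ) :=
        ⟨⟨2 * d + (a : ℕ), by omega⟩, rfl⟩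
      have haB : a ≠ B := Fin.ne_of_val_ne (by omega)
      have haC : a ≠ C := Fin.ne_of_val_ne (by omega)
      have hBC : B ≠ C := Fin.ne_of_val_ne (by omega)
      -- membership in the `i = a` piece
      have hpiece : ∀ σ : Equiv.Perm (Fin (3 * d)), σ ∈ alternatingGroup (Fin (3 * d)) →
          (∀ x : Fin (3 * d), x ≠ a → x ≠ B → x ≠ C → σ x = x) →
          σ ∈ Subgroup.closure (gens d) := by
        intro σ h1 h2
        refine Subgroup.subset_closure (Or.inr (Set.mem_iUnion.2 ⟨⟨(a : ℕ), ha⟩, h1, ?_⟩))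
        intro x hx
        simp only [Set.mem_insert_iff, Set.mem_singleton_iff] at hx
        push_neg at hx
        have e1 : (⟨((⟨(a : ℕ), ha⟩ : Fin d) : ℕ), by have := ha; omega⟩ : Fin (3 * d)) = a :=
          Fin.ext rfl
        have e2 : (⟨d + ((⟨(a : ℕ), ha⟩ : Fin d) : ℕ), by have := ha; omega⟩ : Fin (3 * d))
            = B := Fin.ext (by simpa using hBval.symm)
        have e3 : (⟨2 * d + ((⟨(a : ℕ), ha⟩ : Fin d) : ℕ), by have := ha; omega⟩ : Fin (3 * d))
            = C := Fin.ext (by simpa using hCval.symm)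
        exact h2 x (e1 ▸ hx.1) (e2 ▸ hx.2.1) (e3 ▸ hx.2.2)
      -- the conjugation step
      have step : ∀ τ : Equiv.Perm (Fin (3 * d)), τ ∈ Subgroup.closure (gens d) →
          ¬ ((τ a : ℕ) < d) → (((τ b : ℕ) < d) ↔ ((b : ℕ) < d)) →
          (((τ c : ℕ) < d) ↔ ((c : ℕ) < d)) →
          swap a b * swap b c ∈ Subgroup.closure (gens d) := by
        intro τ hτ h1 h2 h3
        have hmem : swap (τ a) (τ b) * swap (τ b) (τ c) ∈ Subgroup.closure (gens d) := by
          refine ih (τ a) (τ b) (τ c) (fun e => hab (τ.injective e))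
            (fun e => hac (τ.injective e)) (fun e => hbc (τ.injective e)) ?_
          have e2 : (if ((τ b : ℕ) < d) then 1 else 0) = (if ((b : ℕ) < d) then 1 else 0) :=
            if_congr h2 rfl rfl
          have e3 : (if ((τ c : ℕ) < d) then 1 else 0) = (if ((c : ℕ) < d) then 1 else 0) :=
            if_congr h3 rfl rfl
          rw [if_neg h1, e2, e3]
          rw [if_pos ha] at hcount
          omega
        have heq : swap a b * swap b c =
            τ⁻¹ * (swap (τ a) (τ b) * swap (τ b) (τ c)) * τ := by
          rw [t_conj]; group
        rw [heq]
        exact mul_mem (mul_mem (inv_mem hτ) hmem) hτ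
      by_cases hboth : (b = B ∨ b = C) ∧ (c = B ∨ c = C)
      · -- the three points are exactly `{a, B, C}` : direct membership in the piece
        refine hpiece _ (t_mem_alternating hab hbc) ?_
        intro x hx1 hx2 hx3
        refine t_apply_other hx1 ?_ ?_
        · rcases hboth.1 with h | h
          · rw [h]; exact hx2
          · rw [h]; exact hx3
        · rcases hboth.2 with h | h
          · rw [h]; exact hx2
          · rw [h]; exact hx3
      · by_cases hC : b = C ∨ c = C
        · -- use τ = (a C B)
          have hτ : swap a C * swap C B ∈ Subgroup.closure (gens d) :=
            hpiece _ (t_mem_alternating haC (Ne.symm hBC))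
              (fun x hx1 hx2 hx3 => t_apply_other hx1 hx3 hx2)
          have hτa : (swap a C * swap C B) a = C := t_apply₁ haC haB
          rcases hC with hb | hc
          · -- b = C
            have hcB : c ≠ B := fun e => hboth ⟨Or.inr hb, Or.inl e⟩
            have hcC : c ≠ C := fun e => hbc (hb.trans e.symm)
            have hτb : (swap a C * swap C B) b = B := by
              rw [hb]; exact t_apply₂ (Ne.symm haB) (Ne.symm hBC).symm
            have hτc : (swap a C * swap C B) c = c :=
              t_apply_other (Ne.symm hac) hcC hcB
            refine step _ hτ (by rw [hτa]; omega) ?_ (by rw [hτc])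
            rw [hτb, hb]
            omega
          · -- c = C
            have hbB : b ≠ B := fun e => hboth ⟨Or.inl e, Or.inr hc⟩
            have hbC : b ≠ C := hc ▸ hbc
            have hτc : (swap a C * swap C B) c = B := by
              rw [hc]; exact t_apply₂ (Ne.symm haB) (Ne.symm hBC).symm
            have hτb : (swap a C * swap C B) b = b :=
              t_apply_other (Ne.symm hab) hbC hbB
            refine step _ hτ (by rw [hτa]; omega) (by rw [hτb]) ?_
            rw [hτc, hc]
            omega
        · -- b ≠ C and c ≠ C : use τ = (a B C)
          push_neg at hC
          have hτ : swap a B * swap B C ∈ Subgroup.closure (gens d) :=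
            hpiece _ (t_mem_alternating haB hBC)
              (fun x hx1 hx2 hx3 => t_apply_other hx1 hx2 hx3)
          have hτa : (swap a B * swap B C) a = B := t_apply₁ haB haC
          have hτb : (((swap a B * swap B C) b : ℕ) < d) ↔ ((b : ℕ) < d) := by
            by_cases hbB : b = B
            · rw [hbB, t_apply₂ (Ne.symm haC) (Ne.symm hBC)]
              omega
            · rw [t_apply_other (Ne.symm hab) hbB hC.1]
          have hτc : (((swap a B * swap B C) c : ℕ) < d) ↔ ((c : ℕ) < d) := by
            by_cases hcB : c = B
            · rw [hcB, t_apply₂ (Ne.symm haC) (Ne.symm hBC)]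
              omega
            · rw [t_apply_other (Ne.symm hac) hcB hC.2]
          exact step _ hτ (by rw [hτa]; omega) hτb hτc
    intro a b c hab hac hbc hcount
    by_cases hla : (a : ℕ) < d
    · exact core a b c hab hac hbc hcount hla
    by_cases hlb : (b : ℕ) < d
    · rw [t_cyclic hab hac hbc]
      exact core b c a hbc (Ne.symm hab) (Ne.symm hac) (by split_ifs at hcount ⊢ <;> omega) hlb
    by_cases hlc : (c : ℕ) < d
    · rw [t_cyclic hab hac hbc, t_cyclic hbc (Ne.symm hab) (Ne.symm hac)]
      exact core c a b (Ne.symm hac) (Ne.symm hbc) hab (by split_ifs at hcount ⊢ <;> omega) hlc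
    · exact hhigh a b c hab hac hbc hla hlb hlc

end AltGenAux

/-- `Alt(3d)` is generated by `Alt({d, …, 3d-1})` together with the groups
`Alt({i, d+i, 2d+i})` for `i = 0, …, d-1` (relabelling `{1, …, 3d}` as `{0, …, 3d-1}`). -/
theorem alternating_generated_by_pieces (d : ℕ) (hd : 1 ≤ d) :
    Subgroup.closure
        (altSupported (3 * d) {x | d ≤ (x : ℕ)} ∪
          ⋃ i : Fin d,
            altSupported (3 * d)
              {⟨i.1, by have := i.2; omega⟩, ⟨d + i.1, by have := i.2; omega⟩,
                ⟨2 * d + i.1, by have := i.2; omega⟩}) =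
      alternatingGroup (Fin (3 * d)) := by
  have hgens : (altSupported (3 * d) {x | d ≤ (x : ℕ)} ∪
          ⋃ i : Fin d,
            altSupported (3 * d)
              {⟨i.1, by have := i.2; omega⟩, ⟨d + i.1, by have := i.2; omega⟩,
                ⟨2 * d + i.1, by have := i.2; omega⟩}) = AltGenAux.gens d := rfl
  rw [hgens]
  apply le_antisymm
  · rw [Subgroup.closure_le]
    rintro σ (hσ | hσ)
    · exact hσ.1
    · obtain ⟨i, hi⟩ := Set.mem_iUnion.1 hσ
      exact hi.1
  · intro σ hσ
    rw [← Equiv.Perm.closure_three_cycles_eq_alternating] at hσ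
    refine Subgroup.closure_induction ?_ (one_mem _) (fun x y _ _ hx hy => mul_mem hx hy)
      (fun x _ hx => inv_mem hx) hσ
    intro τ hτ
    obtain ⟨x, y, z, hxy, hxz, hyz, rfl⟩ := AltGenAux.isThreeCycle_eq_t hτ
    exact AltGenAux.key d 3 x y z hxy hxz hyz (by split_ifs <;> omega)
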